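/- Let X be a complex Banach space with a Schauder basis (e_j, e*_j)_{j≥1}, let G be a group of invertible continuous linear operators on X, and let K ⊆ X be G-invariant (g(K) ⊆ K for all g ∈ G). Suppose there exists a strictly increasing sequence (j_n) ⊆ ℕ such that: (1) Σ_{j_n}(G) is a finite group under composition for each n; (2) g maps the closed linear span of {e_i : i ≥ j_n + 1} into itself for every n and every g ∈ G; (3) π_{j_n}(K) ⊆ K for every n. If z ∈ X \ K can be separated from K by a continuous polynomial Q (sup_{w∈K}|Q(w)| < |Q(z)|), then there exists a continuous polynomial P on X with P ∘ g = P for every g ∈ G and sup_{w∈K}|P(w)| < |P(z)|. Furthermore, if Q is homogeneous, then P can be chosen to be homogeneous. -/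

import Mathlib

section SchauderBasis

variable {X : Type*} [NormedAddCommGroup X] [NormedSpace ℂ X]

/-- A continuous polynomial on a normed space `X` over `𝕜`: a function of the form
`P x = a₀ + ∑_{k=1}^{N} A_k (x, …, x)` where each `A_k` is a continuous `k`-linear map. -/
def IsContinuousPolynomial (P : X → ℂ) : Prop :=
  ∃ (N : ℕ) (a₀ : ℂ)
    (A : (k : Fin N) → ContinuousMultilinearMap ℂ (fun _ : Fin (k.1 + 1) => X) ℂ),
    ∀ x, P x = a₀ + ∑ k, A k (fun _ => x)

/-- An `m`-homogeneous continuous polynomial. -/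
def IsHomogeneousPolynomial (m : ℕ) (P : X → ℂ) : Prop :=
  ∃ A : ContinuousMultilinearMap ℂ (fun _ : Fin m => X) ℂ, ∀ x, P x = A (fun _ => x)

/-- The canonical projection `π_n(x) = ∑_{j<n} e*_j(x) • e_j` associated with a Schauder
basis `(e_j, e*_j)` (indices here run over `0, 1, …, n-1`). -/
noncomputable def schauderProj (e : ℕ → X) (eStar : ℕ → X →L[ℂ] ℂ) (n : ℕ) (x : X) : X :=
  ∑ j ∈ Finset.range n, eStar j x • e j

/-- The coordinate map `Π_n : X → ℂⁿ`. -/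
noncomputable def schauderCoord (eStar : ℕ → X →L[ℂ] ℂ) (n : ℕ) (x : X) : Fin n → ℂ :=
  fun i => eStar i x

/-- The inclusion `ι_n : ℂⁿ → X`. -/
noncomputable def schauderIncl (e : ℕ → X) (n : ℕ) (w : Fin n → ℂ) : X :=
  ∑ i : Fin n, w i • e i

/-- `Σ_n(G) = { Π_n ∘ g ∘ ι_n : g ∈ G }`, as a set of maps `ℂⁿ → ℂⁿ`. -/
noncomputable def SigmaSet (e : ℕ → X) (eStar : ℕ → X →L[ℂ] ℂ)
    (G : Subgroup (X ≃L[ℂ] X)) (n : ℕ) : Set ((Fin n → ℂ) → Fin n → ℂ) :=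
  {T | ∃ g ∈ G, T = fun w => schauderCoord eStar n ((g : X ≃L[ℂ] X) (schauderIncl e n w))}

/-- The closed linear span of the basis vectors `e_i` with index `i ≥ n`
(`0`-based; these are the basis vectors beyond the first `n`). -/
def tailSpan (e : ℕ → X) (n : ℕ) : Set X :=
  closure (Submodule.span ℂ {v : X | ∃ i, n ≤ i ∧ v = e i} : Set X)

end SchauderBasis


section Poly
variable {X : Type*} [NormedAddCommGroup X] [NormedSpace ℂ X]

/-- homogeneous representation by sums of products of linear functionals -/
def HRep (m : ℕ) (f : X → ℂ) : Prop :=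
  ∃ (ι : Type) (_ : Fintype ι) (c : ι → ℂ) (ℓ : ι → Fin m → (X →L[ℂ] ℂ)),
    ∀ x, f x = ∑ t, c t * ∏ i, ℓ t i x

/-- polynomial representation -/
def PRep (f : X → ℂ) : Prop :=
  ∃ (ι : Type) (_ : Fintype ι) (c : ι → ℂ) (m : ι → ℕ)
    (ℓ : (t : ι) → Fin (m t) → (X →L[ℂ] ℂ)),
    ∀ x, f x = ∑ t, c t * ∏ i, ℓ t i x

lemma HRep.prep {m : ℕ} {f : X → ℂ} (h : HRep m f) : PRep f := by
  obtain ⟨ι, hι, c, ℓ, hf⟩ := h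
  exact ⟨ι, hι, c, fun _ => m, ℓ, hf⟩

lemma HRep.const (a : ℂ) : HRep 0 (fun _ : X => a) := by
  refine ⟨Fin 1, inferInstance, fun _ => a, fun _ => Fin.elim0, fun x => ?_⟩
  simp

lemma PRep.const (a : ℂ) : PRep (fun _ : X => a) := (HRep.const a).prep

lemma HRep.congr {m : ℕ} {f g : X → ℂ} (hf : HRep m f) (h : ∀ x, g x = f x) :
    HRep m g := by
  obtain ⟨ι, hι, c, ℓ, hf⟩ := hf
  exact ⟨ι, hι, c, ℓ, fun x => (h x).trans (hf x)⟩

lemma PRep.congr {f g : X → ℂ} (hf : PRep f) (h : ∀ x, g x = f x) :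
    PRep g := by
  obtain ⟨ι, hι, c, m, ℓ, hf⟩ := hf
  exact ⟨ι, hι, c, m, ℓ, fun x => (h x).trans (hf x)⟩

lemma HRep.add {m : ℕ} {f g : X → ℂ} (hf : HRep m f) (hg : HRep m g) :
    HRep m (fun x => f x + g x) := by
  obtain ⟨ι, hι, c, ℓ, hf⟩ := hf
  obtain ⟨ι', hι', c', ℓ', hg⟩ := hg
  letI := hι; letI := hι'
  refine ⟨ι ⊕ ι', inferInstance, Sum.elim c c', Sum.elim ℓ ℓ', fun x => ?_⟩
  show f x + g x = _
  rw [Fintype.sum_sum_type, hf, hg]; simp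

lemma PRep.add {f g : X → ℂ} (hf : PRep f) (hg : PRep g) :
    PRep (fun x => f x + g x) := by
  obtain ⟨ι, hι, c, m, ℓ, hf⟩ := hf
  obtain ⟨ι', hι', c', m', ℓ', hg⟩ := hg
  letI := hι; letI := hι'
  refine ⟨ι ⊕ ι', inferInstance, Sum.elim c c', Sum.elim m m', ?_, fun x => ?_⟩
  · rintro (t | t)
    · exact ℓ t
    · exact ℓ' t
  show f x + g x = _
  rw [Fintype.sum_sum_type, hf, hg]; simp; rfl

lemma HRep.mul {m m' : ℕ} {f g : X → ℂ} (hf : HRep m f) (hg : HRep m' g) :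
    HRep (m + m') (fun x => f x * g x) := by
  obtain ⟨ι, hι, c, ℓ, hf⟩ := hf
  obtain ⟨ι', hι', c', ℓ', hg⟩ := hg
  letI := hι; letI := hι'
  refine ⟨ι × ι', inferInstance, fun t => c t.1 * c' t.2,
    fun t => Fin.append (ℓ t.1) (ℓ' t.2), fun x => ?_⟩
  show f x * g x = _
  rw [Fintype.sum_prod_type, hf, hg, Finset.sum_mul_sum]
  refine Finset.sum_congr rfl fun t _ => Finset.sum_congr rfl fun t' _ => ?_
  have : (∏ i : Fin (m + m'), Fin.append (ℓ t) (ℓ' t') i x)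
      = (∏ i : Fin m, ℓ t i x) * ∏ i : Fin m', ℓ' t' i x := by
    rw [Fin.prod_univ_add]
    congr 1
    · exact Finset.prod_congr rfl fun i _ => by rw [Fin.append_left]
    · exact Finset.prod_congr rfl fun i _ => by rw [Fin.append_right]
  rw [this]; ring

lemma PRep.mul {f g : X → ℂ} (hf : PRep f) (hg : PRep g) :
    PRep (fun x => f x * g x) := by
  obtain ⟨ι, hι, c, m, ℓ, hf⟩ := hf
  obtain ⟨ι', hι', c', m', ℓ', hg⟩ := hg
  letI := hι; letI := hι'
  refine ⟨ι × ι', inferInstance, fun t => c t.1 * c' t.2, fun t => m t.1 + m' t.2,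
    fun t => Fin.append (ℓ t.1) (ℓ' t.2), fun x => ?_⟩
  show f x * g x = _
  rw [Fintype.sum_prod_type, hf, hg, Finset.sum_mul_sum]
  refine Finset.sum_congr rfl fun t _ => Finset.sum_congr rfl fun t' _ => ?_
  have : (∏ i : Fin (m t + m' t'), Fin.append (ℓ t) (ℓ' t') i x)
      = (∏ i : Fin (m t), ℓ t i x) * ∏ i : Fin (m' t'), ℓ' t' i x := by
    rw [Fin.prod_univ_add]
    congr 1
    · exact Finset.prod_congr rfl fun i _ => by rw [Fin.append_left]
    · exact Finset.prod_congr rfl fun i _ => by rw [Fin.append_right]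
  rw [this]; ring

lemma HRep.pow {m : ℕ} {f : X → ℂ} (hf : HRep m f) (s : ℕ) :
    HRep (m * s) (fun x => f x ^ s) := by
  induction s with
  | zero => simpa using HRep.const (X := X) 1
  | succ s ih =>
      have h := ih.mul hf
      rw [Nat.mul_succ]
      exact h.congr fun x => by rw [pow_succ]

lemma HRep.finsetSum {m : ℕ} {α : Type*} (s : Finset α) (f : α → X → ℂ)
    (h : ∀ a ∈ s, HRep m (f a)) : HRep m (fun x => ∑ a ∈ s, f a x) := by
  classical
  induction s using Finset.induction with
  | empty =>
      exact ⟨Fin 0, inferInstance, Fin.elim0, Fin.elim0, fun x => by simp⟩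
  | insert a s hnotmem ih =>
      have h1 := h a (Finset.mem_insert_self a s)
      have h2 := ih fun b hb => h b (Finset.mem_insert_of_mem hb)
      exact (h1.add h2).congr fun x => by rw [Finset.sum_insert hnotmem]

lemma PRep.finsetSum {α : Type*} (s : Finset α) (f : α → X → ℂ)
    (h : ∀ a ∈ s, PRep (f a)) : PRep (fun x => ∑ a ∈ s, f a x) := by
  classical
  induction s using Finset.induction with
  | empty =>
      exact ⟨Fin 0, inferInstance, Fin.elim0, fun t => 0, fun t => Fin.elim0, fun x => by simp⟩
  | insert a s hnotmem ih =>
      have h1 := h a (Finset.mem_insert_self a s)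
      have h2 := ih fun b hb => h b (Finset.mem_insert_of_mem hb)
      exact (h1.add h2).congr fun x => by rw [Finset.sum_insert hnotmem]

/-- expansion of a continuous multilinear map along a finite "basis" -/
lemma hrep_expand {p n : ℕ} (A : ContinuousMultilinearMap ℂ (fun _ : Fin p => X) ℂ)
    (ℓ : Fin n → (X →L[ℂ] ℂ)) (v : Fin n → X) :
    HRep p (fun x => A (fun _ => ∑ j : Fin n, ℓ j x • v j)) := by
  classical
  refine ⟨Fin p → Fin n, inferInstance, fun r => A (fun i => v (r i)),
    fun r i => ℓ (r i), fun x => ?_⟩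
  have h1 : A (fun _ => ∑ j : Fin n, ℓ j x • v j)
      = ∑ r : Fin p → Fin n, A (fun i => ℓ (r i) x • v (r i)) :=
    A.toMultilinearMap.map_sum (fun _ j => ℓ j x • v j)
  dsimp only
  rw [h1]
  refine Finset.sum_congr rfl fun r _ => ?_
  have h2 : (A fun i => (ℓ (r i)) x • v (r i)) = (∏ i : Fin p, ℓ (r i) x) • A (fun i => v (r i)) :=
    A.toMultilinearMap.map_smul_univ (fun i => ℓ (r i) x) (fun i => v (r i))
  rw [h2, smul_eq_mul, mul_comm]

lemma HRep.isHomogeneous {m : ℕ} {f : X → ℂ} (h : HRep m f) :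
    IsHomogeneousPolynomial m f := by
  obtain ⟨ι, hι, c, ℓ, hf⟩ := h
  letI := hι
  refine ⟨∑ t : ι, c t •
    ((ContinuousMultilinearMap.mkPiAlgebra ℂ (Fin m) ℂ).compContinuousLinearMap (ℓ t)),
    fun x => ?_⟩
  rw [hf]
  rw [ContinuousMultilinearMap.sum_apply]
  refine Finset.sum_congr rfl fun t _ => ?_
  rw [ContinuousMultilinearMap.smul_apply, ContinuousMultilinearMap.compContinuousLinearMap_apply,
    ContinuousMultilinearMap.mkPiAlgebra_apply]
  simp [smul_eq_mul]

lemma PRep.isContinuousPolynomial {f : X → ℂ} (h : PRep f) : IsContinuousPolynomial f := by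
  classical
  obtain ⟨ι, hι, c, m, ℓ, hf⟩ := h
  letI := hι
  set N := Finset.univ.sup m with hN
  set cast : ι → (d : ℕ) → ContinuousMultilinearMap ℂ (fun _ : Fin d => X) ℂ :=
    fun t d => if h : m t = d then
      (ContinuousMultilinearMap.mkPiAlgebra ℂ (Fin d) ℂ).compContinuousLinearMap
        (fun i => ℓ t (Fin.cast h.symm i)) else 0 with hcast
  have hcasteval : ∀ (t : ι) (d : ℕ) (hd : m t = d) (x : X),
      cast t d (fun _ => x) = ∏ i : Fin (m t), ℓ t i x := by
    intro t d hd x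
    rw [hcast]
    simp only []
    rw [dif_pos hd, ContinuousMultilinearMap.compContinuousLinearMap_apply,
      ContinuousMultilinearMap.mkPiAlgebra_apply]
    exact (Fintype.prod_equiv (finCongr hd) _ _ (fun i => by simp)).symm
  refine ⟨N, ∑ t ∈ Finset.univ.filter (fun t => m t = 0), c t,
    fun k => ∑ t ∈ Finset.univ.filter (fun t => m t = k.1 + 1), c t • cast t (k.1 + 1),
    fun x => ?_⟩
  have hA : ∀ k : Fin N,
      (∑ t ∈ Finset.univ.filter (fun t => m t = k.1 + 1), c t • cast t (k.1 + 1))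
        (fun _ => x)
      = ∑ t ∈ Finset.univ.filter (fun t => m t = k.1 + 1),
          c t * ∏ i : Fin (m t), ℓ t i x := by
    intro k
    rw [ContinuousMultilinearMap.sum_apply]
    refine Finset.sum_congr rfl fun t ht => ?_
    rw [ContinuousMultilinearMap.smul_apply,
      hcasteval t _ (Finset.mem_filter.mp ht).2, smul_eq_mul]
  have hfib : ∑ d ∈ Finset.range (N + 1),
      ∑ t ∈ Finset.univ.filter (fun t => m t = d), (c t * ∏ i : Fin (m t), ℓ t i x)
      = ∑ t : ι, c t * ∏ i : Fin (m t), ℓ t i x := by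
    refine Finset.sum_fiberwise_of_maps_to (fun t _ => ?_) _
    exact Finset.mem_range.mpr (Nat.lt_succ_of_le (Finset.le_sup (Finset.mem_univ t)))
  have hzero : ∑ t ∈ Finset.univ.filter (fun t => m t = 0),
      (c t * ∏ i : Fin (m t), ℓ t i x)
      = ∑ t ∈ Finset.univ.filter (fun t => m t = 0), c t := by
    refine Finset.sum_congr rfl fun t ht => ?_
    haveI : IsEmpty (Fin (m t)) := by
      rw [(Finset.mem_filter.mp ht).2]; infer_instance
    simp [Finset.univ_eq_empty]
  calc f x = ∑ t : ι, c t * ∏ i : Fin (m t), ℓ t i x := hf x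
    _ = ∑ d ∈ Finset.range (N + 1),
        ∑ t ∈ Finset.univ.filter (fun t => m t = d),
          (c t * ∏ i : Fin (m t), ℓ t i x) := hfib.symm
    _ = (∑ d ∈ Finset.range N,
          ∑ t ∈ Finset.univ.filter (fun t => m t = d + 1),
            (c t * ∏ i : Fin (m t), ℓ t i x))
        + ∑ t ∈ Finset.univ.filter (fun t => m t = 0),
            (c t * ∏ i : Fin (m t), ℓ t i x) := Finset.sum_range_succ' _ N
    _ = _ := by
        rw [hzero, add_comm]
        congr 1
        rw [← Fin.sum_univ_eq_sum_range (fun d =>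
          ∑ t ∈ Finset.univ.filter (fun t => m t = d + 1),
            (c t * ∏ i : Fin (m t), ℓ t i x)) N]
        exact Finset.sum_congr rfl fun k _ => (hA k).symm

end Poly

section Schauder
variable {X : Type*} [NormedAddCommGroup X] [NormedSpace ℂ X]

noncomputable def projCLM (e : ℕ → X) (eStar : ℕ → X →L[ℂ] ℂ) (n : ℕ) : X →L[ℂ] X :=
  ∑ j ∈ Finset.range n, (eStar j).smulRight (e j)

lemma projCLM_apply (e : ℕ → X) (eStar : ℕ → X →L[ℂ] ℂ) (n : ℕ) (x : X) :
    projCLM e eStar n x = schauderProj e eStar n x := by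
  simp [projCLM, schauderProj, ContinuousLinearMap.sum_apply]

lemma incl_coord (e : ℕ → X) (eStar : ℕ → X →L[ℂ] ℂ) (n : ℕ) (x : X) :
    schauderIncl e n (schauderCoord eStar n x) = schauderProj e eStar n x := by
  unfold schauderIncl schauderCoord schauderProj
  exact Fin.sum_univ_eq_sum_range (fun j => eStar j x • e j) n

lemma sub_proj_mem_tailSpan {e : ℕ → X} {eStar : ℕ → X →L[ℂ] ℂ}
    (hbasis : ∀ x : X,
      Filter.Tendsto (fun n => schauderProj e eStar n x) Filter.atTop (nhds x))
    (n : ℕ) (x : X) : x - schauderProj e eStar n x ∈ tailSpan e n := by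
  have htend : Filter.Tendsto (fun N => schauderProj e eStar N x - schauderProj e eStar n x)
      Filter.atTop (nhds (x - schauderProj e eStar n x)) :=
    (hbasis x).sub tendsto_const_nhds
  refine mem_closure_of_tendsto htend ?_
  filter_upwards [Filter.eventually_ge_atTop n] with N hN
  have : schauderProj e eStar N x - schauderProj e eStar n x
      = ∑ j ∈ Finset.Ico n N, eStar j x • e j := by
    rw [Finset.sum_Ico_eq_sub _ hN]; rfl
  rw [this]
  refine Submodule.sum_mem _ fun j hj => ?_
  refine Submodule.smul_mem _ _ (Submodule.subset_span ?_)
  exact ⟨j, (Finset.mem_Ico.mp hj).1, rfl⟩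

lemma eStar_zero_on_tail {e : ℕ → X} {eStar : ℕ → X →L[ℂ] ℂ}
    (hdual : ∀ i j, eStar i (e j) = if i = j then 1 else 0)
    {i n : ℕ} (hi : i < n) {y : X} (hy : y ∈ tailSpan e n) : eStar i y = 0 := by
  have hsub : (Submodule.span ℂ {v : X | ∃ k, n ≤ k ∧ v = e k} : Set X)
      ⊆ ((eStar i).ker : Set X) := by
    rw [SetLike.coe_subset_coe, Submodule.span_le]
    rintro v ⟨k, hk, rfl⟩
    simp only [SetLike.mem_coe, LinearMap.mem_ker]
    have : eStar i (e k) = if i = k then 1 else 0 := hdual i k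
    rw [ContinuousLinearMap.coe_coe, this, if_neg (by omega)]
  have hclosed : closure ((Submodule.span ℂ {v : X | ∃ k, n ≤ k ∧ v = e k} : Set X))
      ⊆ ((eStar i).ker : Set X) :=
    closure_minimal hsub (ContinuousLinearMap.isClosed_ker (eStar i))
  exact hclosed hy

end Schauder


open Filter in
lemma turan_claim1 {ι : Type*} [DecidableEq ι] (W : Finset ι) (hWne : W.Nonempty)
    (ω : ι → ℂ) (hωnorm : ∀ t ∈ W, ‖ω t‖ = 1) :
    ∀ S₀ : ℕ, ∃ s, S₀ < s ∧ (1:ℝ)/2 ≤ ‖∑ t ∈ W, ω t ^ s‖ := by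
  classical
  intro S₀
  set u : ι × ι → ℂ := fun p => ω p.1 * (starRingEnd ℂ) (ω p.2) with hu
  have hunorm : ∀ p ∈ W ×ˢ W, ‖u p‖ = 1 := by
    rintro ⟨t, t'⟩ hp
    rw [Finset.mem_product] at hp
    simp [hu, norm_mul, hωnorm _ hp.1, hωnorm _ hp.2]
  set B : ℝ := ∑ p ∈ W ×ˢ W, (if u p = 1 then 0 else 2 / ‖u p - 1‖) with hB
  have hB0 : 0 ≤ B := Finset.sum_nonneg fun p _ => by positivity
  set L : ℕ := ⌈2 * B⌉₊ + 1 with hL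
  have hLpos : 0 < L := Nat.succ_pos _
  have hBL : 2 * B ≤ (L : ℝ) := by
    have := Nat.le_ceil (2 * B)
    push_cast [hL]
    linarith
  set V : ℕ → ℂ := fun s => ∑ t ∈ W, ω t ^ s with hV
  -- product formula
  have hVV : ∀ s : ℕ, V s * (starRingEnd ℂ) (V s) = ∑ p ∈ W ×ˢ W, u p ^ s := by
    intro s
    rw [hV]
    simp only [map_sum, Finset.sum_mul_sum, Finset.sum_product]
    refine Finset.sum_congr rfl fun t _ => Finset.sum_congr rfl fun t' _ => ?_
    rw [hu, map_pow, mul_pow]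
  -- sum over the window
  have hswap : ∑ i ∈ Finset.range L, (V (S₀ + 1 + i) * (starRingEnd ℂ) (V (S₀ + 1 + i)))
      = ∑ p ∈ W ×ˢ W, ∑ i ∈ Finset.range L, u p ^ (S₀ + 1 + i) := by
    rw [Finset.sum_comm]
    exact Finset.sum_congr rfl fun i _ => hVV _
  -- split by u p = 1
  have hsplit : ∑ p ∈ W ×ˢ W, ∑ i ∈ Finset.range L, u p ^ (S₀ + 1 + i)
      = (((W ×ˢ W).filter (fun p => u p = 1)).card : ℂ) * L
        + ∑ p ∈ (W ×ˢ W).filter (fun p => ¬ u p = 1), ∑ i ∈ Finset.range L, u p ^ (S₀ + 1 + i) := by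
    rw [← Finset.sum_filter_add_sum_filter_not (W ×ˢ W) (fun p => u p = 1)]
    congr 1
    have hconst : ∀ p ∈ (W ×ˢ W).filter (fun p => u p = 1),
        ∑ i ∈ Finset.range L, u p ^ (S₀ + 1 + i) = (L : ℂ) := by
      intro p hp
      have h1 : u p = 1 := (Finset.mem_filter.mp hp).2
      simp [h1]
    rw [Finset.sum_congr rfl hconst, Finset.sum_const, nsmul_eq_mul, mul_comm]
  -- bound the non-1 part
  have hbound : ‖∑ p ∈ (W ×ˢ W).filter (fun p => ¬ u p = 1), ∑ i ∈ Finset.range L, u p ^ (S₀ + 1 + i)‖ ≤ B := by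
    refine (norm_sum_le _ _).trans ?_
    rw [hB, ← Finset.sum_filter_add_sum_filter_not (W ×ˢ W) (fun p => u p = 1)
      (fun p => if u p = 1 then (0:ℝ) else 2 / ‖u p - 1‖)]
    have h1 : ∑ p ∈ (W ×ˢ W).filter (fun p => u p = 1),
        (if u p = 1 then (0:ℝ) else 2 / ‖u p - 1‖) = 0 := by
      refine Finset.sum_eq_zero fun p hp => if_pos (Finset.mem_filter.mp hp).2
    rw [h1, zero_add]
    refine Finset.sum_le_sum fun p hp => ?_
    have hp' := Finset.mem_filter.mp hp
    rw [if_neg hp'.2]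
    have hne : u p ≠ 1 := hp'.2
    have hnorm1 : ‖u p‖ = 1 := hunorm p hp'.1
    have hgeom : ∑ i ∈ Finset.range L, u p ^ (S₀ + 1 + i)
        = u p ^ (S₀ + 1) * ((u p ^ L - 1) / (u p - 1)) := by
      rw [← geom_sum_eq hne L, Finset.mul_sum]
      exact Finset.sum_congr rfl fun i _ => by rw [← pow_add]
    rw [hgeom, norm_mul, norm_pow, hnorm1, one_pow, one_mul, norm_div]
    have hd : 0 < ‖u p - 1‖ := by
      rw [norm_pos_iff]
      exact sub_ne_zero.mpr hne
    rw [div_le_div_iff_of_pos_right hd]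
    calc ‖u p ^ L - 1‖ ≤ ‖u p ^ L‖ + ‖(1:ℂ)‖ := norm_sub_le _ _
      _ = 2 := by rw [norm_pow, hnorm1, one_pow, norm_one]; norm_num
  -- diagonal count ≥ 1
  obtain ⟨t₀, ht₀⟩ := hWne
  have hdiag : 1 ≤ ((W ×ˢ W).filter (fun p => u p = 1)).card := by
    refine Finset.card_pos.mpr ⟨(t₀, t₀), Finset.mem_filter.mpr ⟨Finset.mem_product.mpr ⟨ht₀, ht₀⟩, ?_⟩⟩
    rw [hu]
    simp only []
    rw [Complex.mul_conj]
    norm_cast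
    rw [Complex.normSq_eq_norm_sq, hωnorm _ ht₀]
    norm_num
  -- take real parts
  have hre : (L : ℝ) / 2 ≤ ∑ i ∈ Finset.range L, Complex.normSq (V (S₀ + 1 + i)) := by
    have h1 : (∑ i ∈ Finset.range L, Complex.normSq (V (S₀ + 1 + i)) : ℝ)
        = (∑ i ∈ Finset.range L, (V (S₀ + 1 + i) * (starRingEnd ℂ) (V (S₀ + 1 + i)))).re := by
      rw [Complex.re_sum]
      exact Finset.sum_congr rfl fun i _ => by rw [Complex.mul_conj, Complex.ofReal_re]
    rw [h1, hswap, hsplit]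
    set R := ∑ p ∈ (W ×ˢ W).filter (fun p => ¬ u p = 1), ∑ i ∈ Finset.range L, u p ^ (S₀ + 1 + i)
    rw [Complex.add_re]
    have h2 : ((((W ×ˢ W).filter (fun p => u p = 1)).card : ℂ) * (L:ℕ)).re
        = (((W ×ˢ W).filter (fun p => u p = 1)).card : ℝ) * L := by
      norm_cast
    have h3 : |R.re| ≤ B := le_trans (Complex.abs_re_le_norm R) hbound
    have h4 : (1:ℝ) * L ≤ (((W ×ˢ W).filter (fun p => u p = 1)).card : ℝ) * L := by
      have : (1:ℝ) ≤ (((W ×ˢ W).filter (fun p => u p = 1)).card : ℝ) := by exact_mod_cast hdiag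
      exact mul_le_mul_of_nonneg_right this (Nat.cast_nonneg L)
    rw [h2]
    have := abs_le.mp h3
    nlinarith [this.1]
  -- extract one big term
  by_contra hcon
  push_neg at hcon
  have hall : ∀ i ∈ Finset.range L, Complex.normSq (V (S₀ + 1 + i)) < 1/2 := by
    intro i _
    have hs := hcon (S₀ + 1 + i) (by omega)
    have hnn : 0 ≤ ‖V (S₀ + 1 + i)‖ := norm_nonneg _
    rw [Complex.normSq_eq_norm_sq]
    nlinarith
  have hlt : ∑ i ∈ Finset.range L, Complex.normSq (V (S₀ + 1 + i))
      < ∑ i ∈ Finset.range L, (1:ℝ)/2 :=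
    Finset.sum_lt_sum_of_nonempty (Finset.nonempty_range_iff.mpr (by omega)) hall
  rw [Finset.sum_const, Finset.card_range, nsmul_eq_mul] at hlt
  have : (L:ℝ) * (1/2) = (L:ℝ)/2 := by ring
  rw [this] at hlt
  linarith

lemma turan {ι : Type*} [DecidableEq ι] (F : Finset ι) (a : ι → ℂ) (c M : ℝ)
    (hc : 0 ≤ c) (hcM : c < M)
    (hmax : ∃ t ∈ F, ‖a t‖ = M) (hle : ∀ t ∈ F, ‖a t‖ ≤ M) :
    ∃ s : ℕ, (F.card : ℝ) * c ^ s < ‖∑ t ∈ F, a t ^ s‖ := by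
  classical
  have hM : 0 < M := lt_of_le_of_lt hc hcM
  set W := F.filter (fun t => ‖a t‖ = M) with hWdef
  set W' := F.filter (fun t => ¬ ‖a t‖ = M) with hW'def
  obtain ⟨t₀, ht₀F, ht₀⟩ := hmax
  have hWne : W.Nonempty := ⟨t₀, Finset.mem_filter.mpr ⟨ht₀F, ht₀⟩⟩
  set ω : ι → ℂ := fun t => a t / M with hω
  have hωnorm : ∀ t ∈ W, ‖ω t‖ = 1 := by
    intro t ht
    have h1 : ‖a t‖ = M := (Finset.mem_filter.mp ht).2
    rw [hω]
    simp only [norm_div]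
    rw [h1, Complex.norm_real, Real.norm_eq_abs, abs_of_pos hM, div_self hM.ne']
  -- the bound r for the small terms
  set r : ℝ := (insert c (W'.image fun t => ‖a t‖)).max' (Finset.insert_nonempty _ _) with hr
  have hcr : c ≤ r := Finset.le_max' _ _ (Finset.mem_insert_self _ _)
  have hr0 : 0 ≤ r := hc.trans hcr
  have hrM : r < M := by
    rw [hr]
    rw [Finset.max'_lt_iff]
    intro y hy
    rcases Finset.mem_insert.mp hy with h | h
    · exact h ▸ hcM
    · obtain ⟨t, ht, rfl⟩ := Finset.mem_image.mp h
      have ht' := Finset.mem_filter.mp ht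
      exact lt_of_le_of_ne (hle t ht'.1) ht'.2
  have hrb : ∀ t ∈ W', ‖a t‖ ≤ r := by
    intro t ht
    rw [hr]
    exact Finset.le_max' _ _
      (Finset.mem_insert_of_mem (Finset.mem_image_of_mem (fun t => ‖a t‖) ht))
  -- choose S₀
  have htend : Filter.Tendsto (fun s : ℕ => (r / M) ^ s) Filter.atTop (nhds 0) :=
    tendsto_pow_atTop_nhds_zero_of_lt_one (by positivity) ((div_lt_one hM).mpr hrM)
  have hε : (0:ℝ) < 1 / (4 * ((F.card : ℝ) + 1)) := by positivity
  obtain ⟨S₀, hS₀⟩ := Filter.eventually_atTop.mp (htend.eventually_lt_const hε)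
  obtain ⟨s, hsS₀, hVs⟩ := turan_claim1 W hWne ω hωnorm S₀
  refine ⟨s, ?_⟩
  -- decompose the sum
  have hdecomp : ∑ t ∈ F, a t ^ s = (∑ t ∈ W, a t ^ s) + ∑ t ∈ W', a t ^ s :=
    (Finset.sum_filter_add_sum_filter_not F _ _).symm
  have hWsum : ∑ t ∈ W, a t ^ s = (M:ℂ) ^ s * ∑ t ∈ W, ω t ^ s := by
    rw [Finset.mul_sum]
    refine Finset.sum_congr rfl fun t ht => ?_
    rw [hω]
    simp only []
    rw [← mul_pow, mul_div_cancel₀]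
    exact_mod_cast hM.ne'
  have hWnorm : M ^ s * (1/2) ≤ ‖∑ t ∈ W, a t ^ s‖ := by
    rw [hWsum, norm_mul, norm_pow, Complex.norm_real, Real.norm_eq_abs, abs_of_pos hM]
    exact mul_le_mul_of_nonneg_left hVs (by positivity)
  have hW'norm : ‖∑ t ∈ W', a t ^ s‖ ≤ (F.card : ℝ) * r ^ s := by
    refine (norm_sum_le _ _).trans ?_
    have h1 : ∀ t ∈ W', ‖a t ^ s‖ ≤ r ^ s := fun t ht => by
      rw [norm_pow]
      exact pow_le_pow_left₀ (norm_nonneg _) (hrb t ht) s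
    refine (Finset.sum_le_sum h1).trans ?_
    rw [Finset.sum_const, nsmul_eq_mul]
    have : (W'.card : ℝ) ≤ (F.card : ℝ) := by
      exact_mod_cast Finset.card_le_card (Finset.filter_subset _ _)
    exact mul_le_mul_of_nonneg_right this (by positivity)
  have hlow : ‖∑ t ∈ W, a t ^ s‖ - ‖∑ t ∈ W', a t ^ s‖ ≤ ‖∑ t ∈ F, a t ^ s‖ := by
    rw [hdecomp]
    have := norm_sub_le ((∑ t ∈ W, a t ^ s) + ∑ t ∈ W', a t ^ s) (∑ t ∈ W', a t ^ s)
    simp only [add_sub_cancel_right] at this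
    linarith
  -- smallness of r^s
  have hsmall : (F.card : ℝ) * r ^ s < M ^ s / 4 := by
    have h1 := hS₀ s (by omega)
    have h2 : (r / M) ^ s = r ^ s / M ^ s := div_pow r M s
    rw [h2] at h1
    have hMpow : (0:ℝ) < M ^ s := by positivity
    have hD : (0:ℝ) < 4 * ((F.card:ℝ) + 1) := by positivity
    have h3 : r ^ s < M ^ s / (4 * ((F.card : ℝ) + 1)) := by
      rw [lt_div_iff₀ hD]
      have h4 := (div_lt_div_iff₀ hMpow hD).mp h1
      linarith
    calc (F.card : ℝ) * r ^ s < (F.card : ℝ) * (M ^ s / (4 * ((F.card : ℝ) + 1))) := by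
          have : 0 < F.card := Finset.card_pos.mpr ⟨t₀, ht₀F⟩
          exact mul_lt_mul_of_pos_left h3 (by exact_mod_cast this)
      _ ≤ M ^ s / 4 := by
          have hq : (0:ℝ) ≤ (F.card:ℝ) := Nat.cast_nonneg _
          rw [← mul_div_assoc, div_le_div_iff₀ (by positivity) (by norm_num : (0:ℝ) < 4)]
          nlinarith [hMpow, hq]
  have hcs : c ^ s ≤ r ^ s := pow_le_pow_left₀ hc hcr s
  have hfinal : (F.card : ℝ) * c ^ s < M ^ s * (1/2) - (F.card : ℝ) * r ^ s := by
    have h4 : (F.card : ℝ) * c ^ s ≤ (F.card : ℝ) * r ^ s :=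
      mul_le_mul_of_nonneg_left hcs (Nat.cast_nonneg _)
    nlinarith [hsmall]
  linarith [hlow, hWnorm, hW'norm, hfinal]


section MoreLemmas
variable {X : Type*} [NormedAddCommGroup X] [NormedSpace ℂ X]

lemma PRep.pow {f : X → ℂ} (hf : PRep f) (s : ℕ) : PRep (fun x => f x ^ s) := by
  induction s with
  | zero => exact (PRep.const 1).congr fun x => by simp
  | succ s ih => exact (ih.mul hf).congr fun x => by rw [pow_succ]

lemma IsContinuousPolynomial.continuous {f : X → ℂ} (h : IsContinuousPolynomial f) :
    Continuous f := by
  obtain ⟨N, a₀, A, hf⟩ := h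
  have : f = fun x => a₀ + ∑ k, A k fun _ => x := funext hf
  rw [this]
  exact continuous_const.add (continuous_finset_sum _ fun k _ =>
    (A k).cont.comp (continuous_pi fun _ => continuous_id))

end MoreLemmas

/-- Let `X` be a complex Banach space with Schauder basis `(e_j, e*_j)`, `G`
a group of invertible continuous linear operators on `X`, `K` a `G`-invariant set. Suppose
there is a strictly increasing sequence `(j_n)` such that each `Σ_{j_n}(G)` is a finite group
under composition, each `g ∈ G` maps the closed span of the basis vectors beyond the first
`j_n` into itself, and `π_{j_n}(K) ⊆ K`. If `z ∉ K` is separated from `K` by a continuous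
polynomial `Q`, then some `G`-invariant continuous polynomial `P` separates `z` from `K`;
if `Q` is homogeneous, `P` can be chosen homogeneous. -/
theorem statement8 {X : Type*} [NormedAddCommGroup X] [NormedSpace ℂ X] [CompleteSpace X]
    (e : ℕ → X) (eStar : ℕ → X →L[ℂ] ℂ)
    (hdual : ∀ i j, eStar i (e j) = if i = j then 1 else 0)
    (hbasis : ∀ x : X,
      Filter.Tendsto (fun n => schauderProj e eStar n x) Filter.atTop (nhds x))
    (G : Subgroup (X ≃L[ℂ] X))
    (K : Set X) (hK : ∀ g ∈ G, ∀ x ∈ K, (g : X ≃L[ℂ] X) x ∈ K)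
    (j : ℕ → ℕ) (hjmono : StrictMono j)
    (hfin : ∀ n, (SigmaSet e eStar G (j n)).Finite)
    (hcomp : ∀ n, ∀ T ∈ SigmaSet e eStar G (j n), ∀ S ∈ SigmaSet e eStar G (j n),
      T ∘ S ∈ SigmaSet e eStar G (j n))
    (hid : ∀ n, id ∈ SigmaSet e eStar G (j n))
    (hinv : ∀ n, ∀ T ∈ SigmaSet e eStar G (j n), ∃ S ∈ SigmaSet e eStar G (j n),
      T ∘ S = id ∧ S ∘ T = id)
    (htail : ∀ n, ∀ g ∈ G, ∀ x ∈ tailSpan e (j n), (g : X ≃L[ℂ] X) x ∈ tailSpan e (j n))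
    (hprojK : ∀ n, ∀ x ∈ K, schauderProj e eStar (j n) x ∈ K)
    (z : X) (hz : z ∉ K)
    (Q : X → ℂ) (hQ : IsContinuousPolynomial Q)
    (hsep : ∃ c, c < ‖Q z‖ ∧ ∀ w ∈ K, ‖Q w‖ ≤ c) :
    (∃ P : X → ℂ, IsContinuousPolynomial P ∧
      (∀ g ∈ G, ∀ x : X, P ((g : X ≃L[ℂ] X) x) = P x) ∧
      ∃ c, c < ‖P z‖ ∧ ∀ w ∈ K, ‖P w‖ ≤ c) ∧
    ∀ m : ℕ, IsHomogeneousPolynomial m Q →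
      ∃ (m' : ℕ) (P : X → ℂ), IsHomogeneousPolynomial m' P ∧
        (∀ g ∈ G, ∀ x : X, P ((g : X ≃L[ℂ] X) x) = P x) ∧
        ∃ c, c < ‖P z‖ ∧ ∀ w ∈ K, ‖P w‖ ≤ c := by
  classical
  by_cases hKne : K.Nonempty
  swap
  · -- K is empty: constants work
    have hKempty : K = ∅ := Set.not_nonempty_iff_eq_empty.mp hKne
    constructor
    · refine ⟨fun _ => 1, (PRep.const 1).isContinuousPolynomial, fun g hg x => rfl, 0, by norm_num, ?_⟩
      intro w hw
      rw [hKempty] at hw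
      exact absurd hw (Set.notMem_empty w)
    · intro m hm
      refine ⟨0, fun _ => 1, (HRep.const 1).isHomogeneous, fun g hg x => rfl, 0, by norm_num, ?_⟩
      intro w hw
      rw [hKempty] at hw
      exact absurd hw (Set.notMem_empty w)
  obtain ⟨c, hcQz, hcK⟩ := hsep
  obtain ⟨w₀, hw₀⟩ := hKne
  have hc0 : (0:ℝ) ≤ c := le_trans (norm_nonneg (Q w₀)) (hcK w₀ hw₀)
  have hQcont : Continuous Q := hQ.continuous
  -- choose n with ‖Q (π_{j n} z)‖ > c
  have hπz : Filter.Tendsto (fun n => schauderProj e eStar (j n) z) Filter.atTop (nhds z) :=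
    (hbasis z).comp hjmono.tendsto_atTop
  have htendQ : Filter.Tendsto (fun n => ‖Q (schauderProj e eStar (j n) z)‖)
      Filter.atTop (nhds ‖Q z‖) := ((hQcont.tendsto z).comp hπz).norm
  obtain ⟨n, hn⟩ := (htendQ.eventually_const_lt hcQz).exists
  -- notation
  set nn := j n with hnn
  set FS : Finset ((Fin nn → ℂ) → Fin nn → ℂ) := (hfin n).toFinset with hFS
  have hmemFS : ∀ T, T ∈ FS ↔ T ∈ SigmaSet e eStar G nn := fun T => (hfin n).mem_toFinset
  set QT : ((Fin nn → ℂ) → Fin nn → ℂ) → X → ℂ :=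
    fun T x => Q (schauderIncl e nn (T (schauderCoord eStar nn x))) with hQTdef
  -- form of QT for members of SigmaSet
  have hform : ∀ T ∈ SigmaSet e eStar G nn, ∃ ℓ : Fin nn → (X →L[ℂ] ℂ),
      ∀ x, QT T x = Q (∑ i : Fin nn, ℓ i x • e i) := by
    rintro T ⟨g, hg, rfl⟩
    refine ⟨fun i => (eStar i).comp (((g : X ≃L[ℂ] X) : X →L[ℂ] X).comp
      (projCLM e eStar nn)), fun x => ?_⟩
    rw [hQTdef]
    simp only []
    rw [incl_coord, incl_coord]
    congr 1
    refine Eq.symm ?_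
    calc ∑ i : Fin nn, ((eStar (i:ℕ)).comp (((g : X ≃L[ℂ] X) : X →L[ℂ] X).comp
            (projCLM e eStar nn))) x • e (i:ℕ)
        = ∑ i : Fin nn, eStar (i:ℕ) ((g : X ≃L[ℂ] X) (schauderProj e eStar nn x)) • e (i:ℕ) := by
          refine Finset.sum_congr rfl fun i _ => ?_
          simp [projCLM_apply]
      _ = ∑ i ∈ Finset.range nn, eStar i ((g : X ≃L[ℂ] X) (schauderProj e eStar nn x)) • e i :=
          Fin.sum_univ_eq_sum_range
            (fun i => eStar i ((g : X ≃L[ℂ] X) (schauderProj e eStar nn x)) • e i) nn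
      _ = schauderProj e eStar nn ((g : X ≃L[ℂ] X) (schauderProj e eStar nn x)) := rfl
  -- polynomial representation of QT T
  have hQTrep : ∀ T ∈ SigmaSet e eStar G nn, PRep (QT T) := by
    intro T hT
    obtain ⟨ℓ, hℓ⟩ := hform T hT
    obtain ⟨N, a₀, A, hQrep⟩ := hQ
    have h1 : ∀ x, QT T x = a₀ + ∑ k : Fin N, A k (fun _ => ∑ i : Fin nn, ℓ i x • e i) := by
      intro x
      rw [hℓ x, hQrep]
    refine PRep.congr ?_ h1
    exact (PRep.const a₀).add <| PRep.finsetSum Finset.univ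
      (fun k x => A k (fun _ => ∑ i : Fin nn, ℓ i x • e i))
      (fun k _ => (hrep_expand (A k) ℓ (fun i => e i)).prep)
  -- homogeneous representation when Q is homogeneous
  have hQTrepH : ∀ m : ℕ, IsHomogeneousPolynomial m Q →
      ∀ T ∈ SigmaSet e eStar G nn, HRep m (QT T) := by
    intro m hm T hT
    obtain ⟨ℓ, hℓ⟩ := hform T hT
    obtain ⟨A, hA⟩ := hm
    have h1 : ∀ x, QT T x = A (fun _ => ∑ i : Fin nn, ℓ i x • e i) := by
      intro x
      rw [hℓ x, hA]
    exact (hrep_expand A ℓ (fun i => e i)).congr h1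
  -- bound on K
  have hQTK : ∀ T ∈ SigmaSet e eStar G nn, ∀ w ∈ K, ‖QT T w‖ ≤ c := by
    rintro T ⟨g, hg, rfl⟩ w hw
    rw [hQTdef]
    simp only []
    rw [incl_coord, incl_coord]
    exact hcK _ (hprojK n _ (hK g hg _ (hprojK n w hw)))
  -- equivariance
  have hequiv : ∀ g, g ∈ G → ∀ (T : (Fin nn → ℂ) → Fin nn → ℂ) (x : X),
      QT T ((g : X ≃L[ℂ] X) x)
        = QT (T ∘ (fun w => schauderCoord eStar nn ((g : X ≃L[ℂ] X) (schauderIncl e nn w)))) x := by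
    intro g hg T x
    have hcoord : schauderCoord eStar nn ((g : X ≃L[ℂ] X) x)
        = schauderCoord eStar nn ((g : X ≃L[ℂ] X) (schauderIncl e nn (schauderCoord eStar nn x))) := by
      funext i
      rw [incl_coord]
      unfold schauderCoord
      have hzero : eStar i ((g : X ≃L[ℂ] X) x - (g : X ≃L[ℂ] X) (schauderProj e eStar nn x)) = 0 := by
        rw [← map_sub]
        exact eStar_zero_on_tail hdual i.isLt
          (htail n g hg _ (sub_proj_mem_tailSpan hbasis nn x))
      rw [map_sub] at hzero
      linear_combination hzero
    rw [hQTdef]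
    simp only [Function.comp]
    rw [hcoord]
  -- the values at z and the max
  set a : ((Fin nn → ℂ) → Fin nn → ℂ) → ℂ := fun T => QT T z with ha
  have hidFS : id ∈ FS := (hmemFS id).mpr (hid n)
  have hFSne : FS.Nonempty := ⟨id, hidFS⟩
  set M : ℝ := (FS.image fun T => ‖a T‖).max' (hFSne.image _) with hM
  have hmax : ∃ T ∈ FS, ‖a T‖ = M := by
    have := Finset.max'_mem (FS.image fun T => ‖a T‖) (hFSne.image _)
    rw [Finset.mem_image] at this
    obtain ⟨T, hT, hTa⟩ := this
    exact ⟨T, hT, hTa⟩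
  have hle : ∀ T ∈ FS, ‖a T‖ ≤ M := by
    intro T hT
    rw [hM]
    exact Finset.le_max' _ _ (Finset.mem_image_of_mem (fun T => ‖a T‖) hT)
  have haid : a id = Q (schauderProj e eStar nn z) := by
    rw [ha, hQTdef]
    simp only [id]
    rw [incl_coord]
  have hcM : c < M := by
    refine lt_of_lt_of_le ?_ (hle id hidFS)
    rw [haid]
    exact hn
  obtain ⟨s, hs⟩ := turan FS a c M hc0 hcM hmax hle
  -- the invariant polynomial
  set P : X → ℂ := fun x => ∑ T ∈ FS, QT T x ^ s with hP
  have hPz : P z = ∑ T ∈ FS, a T ^ s := rfl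
  -- invariance of P
  have hPinv : ∀ g ∈ G, ∀ x : X, P ((g : X ≃L[ℂ] X) x) = P x := by
    intro g hg x
    set Tg : (Fin nn → ℂ) → Fin nn → ℂ :=
      fun w => schauderCoord eStar nn ((g : X ≃L[ℂ] X) (schauderIncl e nn w)) with hTg
    have hTgmem : Tg ∈ SigmaSet e eStar G nn := ⟨g, hg, rfl⟩
    obtain ⟨Sg, hSgmem, hTS, hST⟩ := hinv n Tg hTgmem
    rw [hP]
    simp only []
    have h1 : ∀ T ∈ FS, QT T ((g : X ≃L[ℂ] X) x) ^ s = QT (T ∘ Tg) x ^ s :=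
      fun T _ => by rw [hequiv g hg T x]
    rw [Finset.sum_congr rfl h1]
    refine Finset.sum_nbij' (fun T => T ∘ Tg) (fun T => T ∘ Sg) ?_ ?_ ?_ ?_ ?_
    · intro T hT
      exact (hmemFS _).mpr (hcomp n T ((hmemFS T).mp hT) Tg hTgmem)
    · intro T hT
      exact (hmemFS _).mpr (hcomp n T ((hmemFS T).mp hT) Sg hSgmem)
    · intro T _
      show (T ∘ Tg) ∘ Sg = T
      rw [Function.comp_assoc, hTS, Function.comp_id]
    · intro T _
      show (T ∘ Sg) ∘ Tg = T
      rw [Function.comp_assoc, hST, Function.comp_id]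
    · intro T _
      rfl
  -- bound of P on K
  have hPK : ∀ w ∈ K, ‖P w‖ ≤ (FS.card : ℝ) * c ^ s := by
    intro w hw
    refine (norm_sum_le _ _).trans ?_
    have h1 : ∀ T ∈ FS, ‖QT T w ^ s‖ ≤ c ^ s := by
      intro T hT
      rw [norm_pow]
      exact pow_le_pow_left₀ (norm_nonneg _) (hQTK T ((hmemFS T).mp hT) w hw) s
    refine (Finset.sum_le_sum h1).trans ?_
    rw [Finset.sum_const, nsmul_eq_mul]
  have hPsep : (FS.card : ℝ) * c ^ s < ‖P z‖ := by rw [hPz]; exact hs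
  constructor
  · refine ⟨P, ?_, hPinv, (FS.card : ℝ) * c ^ s, hPsep, hPK⟩
    exact PRep.isContinuousPolynomial <| PRep.finsetSum FS (fun T x => QT T x ^ s)
      (fun T hT => (hQTrep T ((hmemFS T).mp hT)).pow s)
  · intro m hm
    refine ⟨m * s, P, ?_, hPinv, (FS.card : ℝ) * c ^ s, hPsep, hPK⟩
    exact HRep.isHomogeneous <| HRep.finsetSum FS (fun T x => QT T x ^ s)
      (fun T hT => (hQTrepH m hm T ((hmemFS T).mp hT)).pow s)
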